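/- arXiv:2206.00245 — 6 statements merged into one kernel-verified Lean document; each statement's English description precedes it below -/
import Mathlib

section
/- Let k ≥ 2 be an integer and θ > 0. The equation x = ((θ+2)x/(θ+2x))^k has a positive solution x ≠ 1 if and only if θ ≠ 2/(k−1); moreover when θ ≠ 2/(k−1) this positive solution different from 1 is unique. -/
open Finset

private lemma pow_inj' {a b : ℝ} (ha : 0 ≤ a) (hb : 0 ≤ b) {n : ℕ} (hn : n ≠ 0)
    (h : a ^ n = b ^ n) : a = b := by
  rcases lt_trichotomy a b with h' | h' | h'
  · exact absurd h (ne_of_lt (pow_lt_pow_left₀ h' ha hn))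
  · exact h'
  · exact absurd h.symm (ne_of_lt (pow_lt_pow_left₀ h' hb hn))

private lemma factored (n : ℕ) (θ t : ℝ) :
    t * (θ + 2 * t ^ (n + 2)) - (θ + 2) * t ^ (n + 2)
      = t * (t - 1) * (2 * t ^ (n + 1) - θ * ∑ i ∈ range (n + 1), t ^ i) := by
  have hg := geom_sum_mul t (n + 1)
  linear_combination θ * t * hg

private lemma S_pos (n : ℕ) {t : ℝ} (ht : 0 ≤ t) : 0 < ∑ i ∈ range (n + 1), t ^ i := by
  apply Finset.sum_pos'
  · exact fun i _ => pow_nonneg ht i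
  · exact ⟨0, by simp, by norm_num⟩

/-- Strict sign: if `a` is a root of `h` and `a < b` then `h b > 0`. -/
private lemma h_lt {n : ℕ} {θ : ℝ} (hθ : 0 < θ) {a b : ℝ} (ha : 0 < a) (hab : a < b)
    (hha : 2 * a ^ (n + 1) - θ * ∑ i ∈ range (n + 1), a ^ i = 0) :
    0 < 2 * b ^ (n + 1) - θ * ∑ i ∈ range (n + 1), b ^ i := by
  have hb : 0 < b := ha.trans hab
  have hSa : 0 < ∑ i ∈ range (n + 1), a ^ i := S_pos n ha.le
  have hSb : 0 < ∑ i ∈ range (n + 1), b ^ i := S_pos n hb.le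
  have key : a ^ (n + 1) * ∑ i ∈ range (n + 1), b ^ i
      < b ^ (n + 1) * ∑ i ∈ range (n + 1), a ^ i := by
    rw [Finset.mul_sum, Finset.mul_sum]
    apply Finset.sum_lt_sum_of_nonempty (by simp)
    intro i hi
    have hi' : i < n + 1 := Finset.mem_range.mp hi
    have hsplit : n + 1 = i + (n - i + 1) := by omega
    calc a ^ (n + 1) * b ^ i = (a * b) ^ i * a ^ (n - i + 1) := by
          rw [hsplit, pow_add, mul_pow]; ring
      _ < (a * b) ^ i * b ^ (n - i + 1) := by
          apply mul_lt_mul_of_pos_left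
          · exact pow_lt_pow_left₀ hab ha.le (by omega)
          · exact pow_pos (mul_pos ha hb) i
      _ = b ^ (n + 1) * a ^ i := by rw [hsplit, pow_add, mul_pow]; ring
  -- from hha : θ * Sa = 2 a^{n+1}
  have hθS : θ * ∑ i ∈ range (n + 1), a ^ i = 2 * a ^ (n + 1) := by linarith
  have hmul : (∑ i ∈ range (n + 1), a ^ i) *
      (2 * b ^ (n + 1) - θ * ∑ i ∈ range (n + 1), b ^ i)
      = 2 * (b ^ (n + 1) * ∑ i ∈ range (n + 1), a ^ i
          - a ^ (n + 1) * ∑ i ∈ range (n + 1), b ^ i) := by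
    have : (∑ i ∈ range (n + 1), a ^ i) * (θ * ∑ i ∈ range (n + 1), b ^ i)
        = (θ * ∑ i ∈ range (n + 1), a ^ i) * ∑ i ∈ range (n + 1), b ^ i := by ring
    rw [mul_sub, this, hθS]; ring
  nlinarith [hmul, key, hSa]

private lemma h_inj {n : ℕ} {θ : ℝ} (hθ : 0 < θ) {a b : ℝ} (ha : 0 < a) (hb : 0 < b)
    (hha : 2 * a ^ (n + 1) - θ * ∑ i ∈ range (n + 1), a ^ i = 0)
    (hhb : 2 * b ^ (n + 1) - θ * ∑ i ∈ range (n + 1), b ^ i = 0) : a = b := by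
  rcases lt_trichotomy a b with h' | h' | h'
  · exact absurd hhb (ne_of_gt (h_lt hθ ha h' hha))
  · exact h'
  · exact absurd hha (ne_of_gt (h_lt hθ hb h' hhb))

private lemma h_root (n : ℕ) {θ : ℝ} (hθ : 0 < θ) :
    ∃ t : ℝ, 0 < t ∧ 2 * t ^ (n + 1) - θ * ∑ i ∈ range (n + 1), t ^ i = 0 := by
  set f : ℝ → ℝ := fun t => 2 * t ^ (n + 1) - θ * ∑ i ∈ range (n + 1), t ^ i with hf
  have hcont : Continuous f := by
    apply Continuous.sub
    · exact continuous_const.mul (continuous_pow _)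
    · exact continuous_const.mul (continuous_finset_sum _ fun i _ => continuous_pow i)
  set a : ℝ := min 1 (θ / 2) with ha'
  set b : ℝ := max 1 (θ * (n + 1)) with hb'
  have ha : 0 < a := lt_min one_pos (by positivity)
  have ha1 : a ≤ 1 := min_le_left _ _
  have hb1 : (1 : ℝ) ≤ b := le_max_left _ _
  have hab : a ≤ b := ha1.trans hb1
  have hfa : f a ≤ 0 := by
    have h1 : a ^ (n + 1) ≤ a := by
      simpa using pow_le_pow_of_le_one ha.le ha1 (Nat.one_le_iff_ne_zero.mpr (by omega))
    have h2 : (1 : ℝ) ≤ ∑ i ∈ range (n + 1), a ^ i := by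
      have := Finset.single_le_sum (f := fun i => a ^ i)
        (fun i _ => pow_nonneg ha.le i) (Finset.mem_range.mpr (Nat.succ_pos n))
      simpa using this
    have h3 : a ≤ θ / 2 := min_le_right _ _
    have : θ * 1 ≤ θ * ∑ i ∈ range (n + 1), a ^ i :=
      mul_le_mul_of_nonneg_left h2 hθ.le
    simp only [hf]
    nlinarith
  have hfb : 0 ≤ f b := by
    have hb0 : (0 : ℝ) < b := lt_of_lt_of_le one_pos hb1
    have h1 : ∑ i ∈ range (n + 1), b ^ i ≤ (n + 1 : ℝ) * b ^ n := by
      calc ∑ i ∈ range (n + 1), b ^ i ≤ ∑ _i ∈ range (n + 1), b ^ n :=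
            Finset.sum_le_sum fun i hi =>
              pow_le_pow_right₀ hb1 (Nat.lt_succ_iff.mp (Finset.mem_range.mp hi))
        _ = (n + 1 : ℝ) * b ^ n := by
            rw [Finset.sum_const, Finset.card_range, nsmul_eq_mul]; push_cast; ring
    have h2 : θ * (n + 1) ≤ b := le_max_right _ _
    have h3 : 0 < b ^ n := pow_pos hb0 n
    have h4 : θ * ∑ i ∈ range (n + 1), b ^ i ≤ θ * ((n + 1 : ℝ) * b ^ n) :=
      mul_le_mul_of_nonneg_left h1 hθ.le
    simp only [hf]
    have hbpow : b ^ (n + 1) = b * b ^ n := by ring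
    nlinarith
  have := intermediate_value_Icc hab hcont.continuousOn
  obtain ⟨t, htmem, htval⟩ := this ⟨hfa, hfb⟩
  exact ⟨t, lt_of_lt_of_le ha htmem.1, htval⟩

/-- The core equivalence: for `t > 0`, `t ≠ 1`, and `x = t^(n+2)`, the fixed-point
equation is equivalent to the polynomial root condition. -/
private lemma sol_iff (n : ℕ) {θ : ℝ} (hθ : 0 < θ) {t : ℝ} (ht : 0 < t) (ht1 : t ≠ 1) :
    (t ^ (n + 2) = ((θ + 2) * t ^ (n + 2) / (θ + 2 * t ^ (n + 2))) ^ (n + 2)) ↔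
      2 * t ^ (n + 1) - θ * ∑ i ∈ range (n + 1), t ^ i = 0 := by
  have hx : 0 < t ^ (n + 2) := pow_pos ht _
  have hD : 0 < θ + 2 * t ^ (n + 2) := by positivity
  have hy : 0 ≤ (θ + 2) * t ^ (n + 2) / (θ + 2 * t ^ (n + 2)) := by positivity
  have step1 : (t ^ (n + 2) = ((θ + 2) * t ^ (n + 2) / (θ + 2 * t ^ (n + 2))) ^ (n + 2)) ↔
      t = (θ + 2) * t ^ (n + 2) / (θ + 2 * t ^ (n + 2)) := by
    constructor
    · intro h
      exact pow_inj' ht.le hy (by omega) h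
    · intro h
      conv_lhs => rw [h]
  have step2 : (t = (θ + 2) * t ^ (n + 2) / (θ + 2 * t ^ (n + 2))) ↔
      t * (θ + 2 * t ^ (n + 2)) - (θ + 2) * t ^ (n + 2) = 0 := by
    rw [eq_div_iff hD.ne', sub_eq_zero]
  rw [step1, step2, factored n θ t]
  constructor
  · intro h
    rcases mul_eq_zero.mp h with h' | h'
    · rcases mul_eq_zero.mp h' with h'' | h''
      · exact absurd h'' ht.ne'
      · exact absurd (sub_eq_zero.mp h'') ht1
    · exact h'
  · intro h
    rw [h, mul_zero]

theorem stmt_2 (k : ℕ) (hk : 2 ≤ k) (θ : ℝ) (hθ : 0 < θ) :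
    ((∃ x : ℝ, 0 < x ∧ x ≠ 1 ∧ x = ((θ + 2) * x / (θ + 2 * x))^k) ↔ θ ≠ 2 / ((k : ℝ) - 1)) ∧
    (θ ≠ 2 / ((k : ℝ) - 1) →
      ∃! x : ℝ, 0 < x ∧ x ≠ 1 ∧ x = ((θ + 2) * x / (θ + 2 * x))^k) := by
  obtain ⟨n, rfl⟩ : ∃ n, k = n + 2 := ⟨k - 2, by omega⟩
  have hcast : ((n + 2 : ℕ) : ℝ) - 1 = (n : ℝ) + 1 := by push_cast; ring
  have hn1 : (0 : ℝ) < (n : ℝ) + 1 := by positivity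
  -- value of the polynomial at 1
  have hS1 : ∑ i ∈ range (n + 1), (1 : ℝ) ^ i = (n : ℝ) + 1 := by
    simp [Finset.sum_const, Finset.card_range]
  have h1val : 2 * (1 : ℝ) ^ (n + 1) - θ * ∑ i ∈ range (n + 1), (1 : ℝ) ^ i
      = 2 - θ * ((n : ℝ) + 1) := by rw [hS1]; ring
  have hiff1 : θ = 2 / (((n + 2 : ℕ) : ℝ) - 1) ↔
      2 * (1 : ℝ) ^ (n + 1) - θ * ∑ i ∈ range (n + 1), (1 : ℝ) ^ i = 0 := by
    rw [h1val, hcast, eq_div_iff hn1.ne']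
    constructor <;> intro h <;> linarith
  -- from any solution x, extract a root t ≠ 1
  have extract : ∀ x : ℝ, 0 < x → x ≠ 1 →
      x = ((θ + 2) * x / (θ + 2 * x)) ^ (n + 2) →
      ∃ t : ℝ, 0 < t ∧ t ≠ 1 ∧ t ^ (n + 2) = x ∧
        2 * t ^ (n + 1) - θ * ∑ i ∈ range (n + 1), t ^ i = 0 := by
    intro x hx0 hx1 hxe
    set t : ℝ := x ^ (((n : ℝ) + 2))⁻¹ with htdef
    have ht0 : 0 < t := Real.rpow_pos_of_pos hx0 _
    have htx : t ^ (n + 2) = x := by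
      rw [htdef, ← Real.rpow_natCast (x ^ (((n : ℝ) + 2))⁻¹) (n + 2),
        ← Real.rpow_mul hx0.le]
      push_cast
      rw [inv_mul_cancel₀ (by positivity : (n : ℝ) + 2 ≠ 0), Real.rpow_one]
    have ht1 : t ≠ 1 := by
      intro h
      apply hx1
      rw [← htx, h, one_pow]
    refine ⟨t, ht0, ht1, htx, ?_⟩
    rw [← sol_iff n hθ ht0 ht1]
    rw [htx]
    exact hxe
  obtain ⟨t₀, ht₀, ht₀root⟩ := h_root n hθ
  constructor
  · constructor
    · rintro ⟨x, hx0, hx1, hxe⟩ hθeq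
      obtain ⟨t, ht0, ht1, -, htroot⟩ := extract x hx0 hx1 hxe
      have h1root := hiff1.mp hθeq
      exact ht1 (h_inj hθ ht0 one_pos htroot h1root)
    · intro hne
      have ht₀1 : t₀ ≠ 1 := by
        intro h
        apply hne
        rw [hiff1, ← h]
        exact ht₀root
      refine ⟨t₀ ^ (n + 2), pow_pos ht₀ _, ?_, (sol_iff n hθ ht₀ ht₀1).mpr ht₀root⟩
      intro h
      exact ht₀1 (pow_inj' (n := n + 2) ht₀.le zero_le_one (by omega) (by rw [h, one_pow]))
  · intro hne
    have ht₀1 : t₀ ≠ 1 := by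
      intro h
      apply hne
      rw [hiff1, ← h]
      exact ht₀root
    refine ⟨t₀ ^ (n + 2), ⟨pow_pos ht₀ _, ?_, (sol_iff n hθ ht₀ ht₀1).mpr ht₀root⟩, ?_⟩
    · intro h
      exact ht₀1 (pow_inj' (n := n + 2) ht₀.le zero_le_one (by omega) (by rw [h, one_pow]))
    · rintro y ⟨hy0, hy1, hye⟩
      obtain ⟨t, ht0, ht1, htx, htroot⟩ := extract y hy0 hy1 hye
      rw [← htx, h_inj hθ ht0 ht₀ htroot ht₀root]
end

section
/- Let k ≥ 2 be an integer and θ_c = 2(k+1)/(k−1). If 0 < θ < θ_c, then the equation 2τ^k + (2−θ)(τ^{k−1} + ⋯ + τ) + 2 = 0 has no positive real root. -/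
lemma pair_le (τ : ℝ) (hτ : 0 < τ) (a b : ℕ) : τ^a + τ^b ≤ τ^(a+b) + 1 := by
  rcases le_total τ 1 with h | h
  · have ha : τ^a ≤ 1 := pow_le_one₀ hτ.le h
    have hb : τ^b ≤ 1 := pow_le_one₀ hτ.le h
    have := mul_nonneg (sub_nonneg.2 ha) (sub_nonneg.2 hb)
    nlinarith [pow_add τ a b]
  · have ha : 1 ≤ τ^a := one_le_pow₀ h
    have hb : 1 ≤ τ^b := one_le_pow₀ h
    have := mul_nonneg (sub_nonneg.2 ha) (sub_nonneg.2 hb)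
    nlinarith [pow_add τ a b]

theorem stmt_5 (k : ℕ) (hk : 2 ≤ k) (θ : ℝ) (hθ : 0 < θ)
    (hθc : θ < 2 * ((k : ℝ) + 1) / ((k : ℝ) - 1)) :
    ¬ ∃ τ : ℝ, 0 < τ ∧ 2 * τ^k + (2 - θ) * (∑ i ∈ Finset.range (k-1), τ^(i+1)) + 2 = 0 := by
  rintro ⟨τ, hτ, heq⟩
  set S : ℝ := ∑ i ∈ Finset.range (k-1), τ^(i+1) with hS
  have hk1 : (1:ℝ) ≤ (k:ℝ) - 1 := by
    have : (2:ℝ) ≤ (k:ℝ) := by exact_mod_cast hk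
    linarith
  have hSpos : 0 < S := by
    apply Finset.sum_pos (fun i _ => pow_pos hτ _)
    refine ⟨0, Finset.mem_range.2 ?_⟩; omega
  have hτk : 0 < τ^k := pow_pos hτ _
  -- 2S ≤ (k-1)(τ^k + 1)
  have hpair : 2 * S ≤ ((k:ℝ) - 1) * (τ^k + 1) := by
    have hrefl : ∑ i ∈ Finset.range (k-1), τ^((k-1) - 1 - i + 1) = S :=
      Finset.sum_range_reflect (fun i => τ^(i+1)) (k-1)
    have h2S : 2 * S = ∑ i ∈ Finset.range (k-1), (τ^(i+1) + τ^((k-1) - 1 - i + 1)) := by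
      rw [Finset.sum_add_distrib, hrefl, hS]; ring
    rw [h2S]
    have hcard : ((k:ℝ) - 1) * (τ^k + 1)
        = ∑ _i ∈ Finset.range (k-1), (τ^k + 1) := by
      rw [Finset.sum_const, Finset.card_range, nsmul_eq_mul]
      congr 1
      have : (1:ℝ) ≤ (k:ℝ) := by linarith
      push_cast [Nat.cast_sub (by omega : 1 ≤ k)]
      ring
    rw [hcard]
    apply Finset.sum_le_sum
    intro i hi
    have hi' := Finset.mem_range.1 hi
    have hexp : (i+1) + ((k-1) - 1 - i + 1) = k := by omega
    calc τ^(i+1) + τ^((k-1) - 1 - i + 1) ≤ τ^((i+1) + ((k-1) - 1 - i + 1)) + 1 :=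
          pair_le τ hτ _ _
      _ = τ^k + 1 := by rw [hexp]
  have hθk : θ * ((k:ℝ) - 1) < 2 * ((k:ℝ) + 1) := by
    rw [lt_div_iff₀ (by linarith : (0:ℝ) < (k:ℝ) - 1)] at hθc
    linarith
  rcases le_total θ 2 with h2 | h2
  · nlinarith [mul_nonneg (by linarith : (0:ℝ) ≤ 2 - θ) hSpos.le]
  · have h1 : (θ - 2) * (2 * S) ≤ (θ - 2) * (((k:ℝ) - 1) * (τ^k + 1)) :=
      mul_le_mul_of_nonneg_left hpair (by linarith)
    nlinarith [mul_pos (by nlinarith : (0:ℝ) < 4 - (θ - 2) * ((k:ℝ) - 1)) (by positivity : (0:ℝ) < τ^k + 1)]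
end

section
/- Let k ≥ 2 be an integer and θ_c = 2(k+1)/(k−1). If θ = θ_c, then τ = 1 is the unique positive real root of 2τ^k + (2−θ)(τ^{k−1} + ⋯ + τ) + 2 = 0. -/
theorem stmt_6 (k : ℕ) (hk : 2 ≤ k) (θ : ℝ)
    (hθc : θ = 2 * ((k : ℝ) + 1) / ((k : ℝ) - 1)) :
    (0 < (1:ℝ) ∧ 2 * (1:ℝ)^k + (2 - θ) * (∑ i ∈ Finset.range (k-1), (1:ℝ)^(i+1)) + 2 = 0) ∧
    (∀ τ : ℝ, 0 < τ →
      2 * τ^k + (2 - θ) * (∑ i ∈ Finset.range (k-1), τ^(i+1)) + 2 = 0 → τ = 1) := by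
  have hk1 : (1:ℝ) < (k:ℝ) := by exact_mod_cast lt_of_lt_of_le one_lt_two hk
  have hkpos : (0:ℝ) < (k:ℝ) - 1 := by linarith
  have hkne : (k:ℝ) - 1 ≠ 0 := ne_of_gt hkpos
  have hcast : ((k - 1 : ℕ) : ℝ) = (k:ℝ) - 1 := by
    have h1 : 1 ≤ k := le_trans one_le_two hk
    push_cast [Nat.cast_sub h1]; ring
  have hθ2 : 2 - θ = -4 / ((k:ℝ) - 1) := by
    rw [hθc]; field_simp; ring
  constructor
  · refine ⟨one_pos, ?_⟩
    simp only [one_pow, Finset.sum_const, Finset.card_range, nsmul_eq_mul, mul_one,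
      hcast, hθ2]
    field_simp
    ring
  · intro τ hτ heq
    by_contra hne
    have key : ∀ i ∈ Finset.range (k-1), τ^(i+1) + τ^(k-1-i) < τ^k + 1 := by
      intro i hi
      simp only [Finset.mem_range] at hi
      have hsum : (i+1) + (k-1-i) = k := by omega
      have hprod : 0 < (τ^(i+1) - 1) * (τ^(k-1-i) - 1) := by
        rcases lt_or_gt_of_ne hne with h | h
        · apply mul_pos_of_neg_of_neg
          · have := pow_lt_one₀ (le_of_lt hτ) h (by omega : i+1 ≠ 0)
            linarith
          · have := pow_lt_one₀ (le_of_lt hτ) h (by omega : k-1-i ≠ 0)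
            linarith
        · apply mul_pos
          · have := one_lt_pow₀ h (by omega : i+1 ≠ 0)
            linarith
          · have := one_lt_pow₀ h (by omega : k-1-i ≠ 0)
            linarith
      have hmul : τ^(i+1) * τ^(k-1-i) = τ^k := by rw [← pow_add, hsum]
      nlinarith [hprod]
    have hnonempty : (Finset.range (k-1)).Nonempty := by
      rw [Finset.nonempty_range_iff]; omega
    have hsumlt : ∑ i ∈ Finset.range (k-1), (τ^(i+1) + τ^(k-1-i))
        < ∑ i ∈ Finset.range (k-1), (τ^k + 1) :=
      Finset.sum_lt_sum_of_nonempty hnonempty key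
    have hreflect : ∑ i ∈ Finset.range (k-1), τ^(k-1-i)
        = ∑ i ∈ Finset.range (k-1), τ^(i+1) := by
      rw [← Finset.sum_range_reflect (fun j => τ^(j+1)) (k-1)]
      apply Finset.sum_congr rfl
      intro i hi
      simp only [Finset.mem_range] at hi
      congr 1
      omega
    set S := ∑ i ∈ Finset.range (k-1), τ^(i+1) with hS
    have h2S : S + S < ((k:ℝ)-1) * (τ^k + 1) := by
      rw [Finset.sum_add_distrib, hreflect, Finset.sum_const, Finset.card_range,
        nsmul_eq_mul, hcast] at hsumlt
      exact hsumlt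
    rw [hθ2] at heq
    have heq2 : ((k:ℝ)-1) * (2*τ^k + 2) = 4 * S := by
      have h4 : -4 / ((k:ℝ)-1) * S * ((k:ℝ)-1) = -4 * S := by
        field_simp
      nlinarith [heq]
    nlinarith [h2S, heq2]
end

section
/- Let k ≥ 2 be an integer and θ_c = 2(k+1)/(k−1). If θ > θ_c, then the equation 2τ^k + (2−θ)(τ^{k−1} + ⋯ + τ) + 2 = 0 has exactly two positive real roots, both different from 1, and they are reciprocals of each other. -/
open Finset

private lemma sum_pos_aux (k : ℕ) (hk : 2 ≤ k) {x : ℝ} (hx : 0 < x) :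
    0 < ∑ i ∈ range (k-1), x^(i+1) :=
  Finset.sum_pos (fun i _ => pow_pos hx _) (by rw [Finset.nonempty_range_iff]; omega)

private lemma mono_aux (k : ℕ) (hk : 2 ≤ k) {a b : ℝ} (ha : 0 < a) (hab : a < b) (hb : b ≤ 1) :
    (b^k+1) * (∑ i ∈ range (k-1), a^(i+1)) < (a^k+1) * (∑ i ∈ range (k-1), b^(i+1)) := by
  have ha1 : a < 1 := lt_of_lt_of_le hab hb
  have hab1 : a * b < 1 := by nlinarith
  set T : ℕ → ℝ := fun e => (a^k+1)*b^e - (b^k+1)*a^e with hT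
  have key : ∀ i ∈ range (k-1), 0 < T (i+1) + T (k-1-i) := by
    intro i hi
    rw [mem_range] at hi
    have hek : (i+1) + (k-1-i) = k := by omega
    have hb0 : 0 < b := lt_trans ha hab
    have hTe : ∀ e m : ℕ, e + m = k → T e + T m
        = (b^e - a^e)*(1 - a^m*b^m) + (b^m - a^m)*(1 - a^e*b^e) := by
      intro e m hem
      simp only [hT]
      rw [← hem, pow_add, pow_add]
      ring
    rw [hTe (i+1) (k-1-i) hek]
    have h1 : 0 < b^(i+1) - a^(i+1) :=
      sub_pos.mpr (pow_lt_pow_left₀ hab ha.le (by omega))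
    have h2 : 0 < b^(k-1-i) - a^(k-1-i) :=
      sub_pos.mpr (pow_lt_pow_left₀ hab ha.le (by omega))
    have h3 : a^(k-1-i)*b^(k-1-i) < 1 := by
      rw [← mul_pow]; exact pow_lt_one₀ (mul_nonneg ha.le hb0.le) hab1 (by omega)
    have h4 : a^(i+1)*b^(i+1) < 1 := by
      rw [← mul_pow]; exact pow_lt_one₀ (mul_nonneg ha.le hb0.le) hab1 (by omega)
    nlinarith
  have hrefl : ∑ i ∈ range (k-1), T (k-1-i) = ∑ i ∈ range (k-1), T (i+1) := by
    rw [← Finset.sum_range_reflect (fun i => T (i+1)) (k-1)]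
    apply Finset.sum_congr rfl
    intro i hi
    rw [mem_range] at hi
    congr 1
    omega
  have hsum : 0 < ∑ i ∈ range (k-1), T (i+1) := by
    have h2 : 0 < ∑ i ∈ range (k-1), (T (i+1) + T (k-1-i)) :=
      Finset.sum_pos key (by rw [Finset.nonempty_range_iff]; omega)
    rw [Finset.sum_add_distrib, hrefl] at h2
    linarith
  have heq : ∑ i ∈ range (k-1), T (i+1)
      = (a^k+1) * (∑ i ∈ range (k-1), b^(i+1)) - (b^k+1) * (∑ i ∈ range (k-1), a^(i+1)) := by
    rw [Finset.mul_sum, Finset.mul_sum, ← Finset.sum_sub_distrib]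
  rw [heq] at hsum
  linarith

private lemma symm_aux (k : ℕ) (hk : 2 ≤ k) (θ : ℝ) {τ : ℝ} (hτ : 0 < τ) :
    (2*(1/τ)^k + (2-θ)*(∑ i ∈ range (k-1), (1/τ)^(i+1)) + 2) * τ^k
      = 2*τ^k + (2-θ)*(∑ i ∈ range (k-1), τ^(i+1)) + 2 := by
  have hτ0 : τ ≠ 0 := ne_of_gt hτ
  have hS : τ^k * (∑ i ∈ range (k-1), (1/τ)^(i+1)) = ∑ i ∈ range (k-1), τ^(i+1) := by
    rw [Finset.mul_sum, ← Finset.sum_range_reflect (fun i => τ^(i+1)) (k-1)]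
    apply Finset.sum_congr rfl
    intro i hi
    rw [mem_range] at hi
    have h1 : (i+1) + (k-1-1-i+1) = k := by omega
    rw [div_pow, one_pow, ← h1, pow_add]
    field_simp
    rw [h1]
  have hk' : (1/τ)^k * τ^k = 1 := by
    rw [div_pow, one_pow]; field_simp
  calc (2*(1/τ)^k + (2-θ)*(∑ i ∈ range (k-1), (1/τ)^(i+1)) + 2) * τ^k
      = 2*((1/τ)^k * τ^k) + (2-θ)*(τ^k * (∑ i ∈ range (k-1), (1/τ)^(i+1))) + 2*τ^k := by ring
    _ = _ := by rw [hS, hk']; ring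

private lemma unique_aux (k : ℕ) (hk : 2 ≤ k) (θ : ℝ)
    {a b : ℝ} (ha : 0 < a) (ha1 : a ≤ 1) (hb : 0 < b) (hb1 : b ≤ 1)
    (hfa : 2*a^k + (2-θ)*(∑ i ∈ range (k-1), a^(i+1)) + 2 = 0)
    (hfb : 2*b^k + (2-θ)*(∑ i ∈ range (k-1), b^(i+1)) + 2 = 0) : a = b := by
  set Sa := ∑ i ∈ range (k-1), a^(i+1) with hSa'
  set Sb := ∑ i ∈ range (k-1), b^(i+1) with hSb'
  have hSa : 0 < Sa := sum_pos_aux k hk ha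
  have hSb : 0 < Sb := sum_pos_aux k hk hb
  have h1 : 2*(a^k+1) = (θ-2)*Sa := by linarith
  have h2 : 2*(b^k+1) = (θ-2)*Sb := by linarith
  have e1 : (2*(a^k+1))*Sb = ((θ-2)*Sa)*Sb := by rw [h1]
  have e2 : (2*(b^k+1))*Sa = ((θ-2)*Sb)*Sa := by rw [h2]
  have hcross : (a^k+1)*Sb = (b^k+1)*Sa := by linear_combination (e1 - e2) / 2
  rcases lt_trichotomy a b with h | h | h
  · exfalso; have := mono_aux k hk ha h hb1; linarith
  · exact h
  · exfalso; have := mono_aux k hk hb h ha1; linarith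

theorem stmt_7 (k : ℕ) (hk : 2 ≤ k) (θ : ℝ)
    (hθc : 2 * ((k : ℝ) + 1) / ((k : ℝ) - 1) < θ) :
    ∃ τ₁ τ₂ : ℝ, 0 < τ₁ ∧ 0 < τ₂ ∧ τ₁ ≠ τ₂ ∧ τ₁ ≠ 1 ∧ τ₂ ≠ 1 ∧ τ₂ = 1 / τ₁ ∧
      (2 * τ₁^k + (2 - θ) * (∑ i ∈ Finset.range (k-1), τ₁^(i+1)) + 2 = 0) ∧
      (2 * τ₂^k + (2 - θ) * (∑ i ∈ Finset.range (k-1), τ₂^(i+1)) + 2 = 0) ∧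
      (∀ τ : ℝ, 0 < τ →
        2 * τ^k + (2 - θ) * (∑ i ∈ Finset.range (k-1), τ^(i+1)) + 2 = 0 → τ = τ₁ ∨ τ = τ₂) := by
  set f : ℝ → ℝ := fun τ => 2*τ^k + (2-θ)*(∑ i ∈ range (k-1), τ^(i+1)) + 2 with hf
  have hkR : (0:ℝ) < (k:ℝ) - 1 := by
    have : (2:ℝ) ≤ (k:ℝ) := by exact_mod_cast hk
    linarith
  have hθ2 : 2*((k:ℝ)+1) < θ * ((k:ℝ)-1) := by
    rw [div_lt_iff₀ hkR] at hθc; linarith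
  have hcast : ((k-1:ℕ):ℝ) = (k:ℝ)-1 := by
    have : 1 ≤ k := by omega
    push_cast [this]; ring
  have hf1 : f 1 < 0 := by
    show 2*(1:ℝ)^k + (2-θ)*(∑ i ∈ range (k-1), (1:ℝ)^(i+1)) + 2 < 0
    have hsum : (∑ i ∈ range (k-1), ((1:ℝ))^(i+1)) = ((k-1:ℕ):ℝ) := by simp
    rw [hsum, hcast, one_pow]
    nlinarith
  have hf0 : f 0 = 2 := by
    have hk0 : k ≠ 0 := by omega
    simp [hf, zero_pow hk0]
  have hcont : Continuous f := by
    apply Continuous.add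
    apply Continuous.add
    · exact continuous_const.mul (continuous_pow k)
    · exact continuous_const.mul (continuous_finset_sum _ fun i _ => continuous_pow (i+1))
    · exact continuous_const
  have hivt := intermediate_value_Icc' (by norm_num : (0:ℝ) ≤ 1) hcont.continuousOn
  have h0mem : (0:ℝ) ∈ Set.Icc (f 1) (f 0) := ⟨hf1.le, by rw [hf0]; norm_num⟩
  obtain ⟨c, hc, hfc⟩ := hivt h0mem
  have hc0 : 0 < c := by
    rcases lt_or_eq_of_le hc.1 with h | h
    · exact h
    · exfalso; rw [← h] at hfc; rw [hf0] at hfc; norm_num at hfc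
  have hc1 : c < 1 := by
    rcases lt_or_eq_of_le hc.2 with h | h
    · exact h
    · exfalso; rw [h] at hfc; linarith
  have hck : c^k ≠ 0 := pow_ne_zero _ (ne_of_gt hc0)
  have hfc2 : f (1/c) = 0 := by
    have := symm_aux k hk θ hc0
    have h2 : f (1/c) * c^k = f c := this
    rw [hfc] at h2
    exact (mul_eq_zero.mp h2).resolve_right hck
  have hc2 : 1 < 1/c := one_lt_one_div hc0 hc1
  refine ⟨c, 1/c, hc0, by positivity, ne_of_lt (lt_trans hc1 hc2), ne_of_lt hc1,
    ne_of_gt hc2, rfl, hfc, hfc2, ?_⟩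
  intro τ hτ hfτ
  rcases le_or_gt τ 1 with h | h
  · left; exact unique_aux k hk θ hτ h hc0 hc1.le hfτ hfc
  · right
    have hτ0 : τ ≠ 0 := ne_of_gt hτ
    have hτk : τ^k ≠ 0 := pow_ne_zero _ hτ0
    have hfτ' : f τ = 0 := hfτ
    have hfinv : f (1/τ) = 0 := by
      have h2 : f (1/τ) * τ^k = f τ := symm_aux k hk θ hτ
      rw [hfτ'] at h2
      exact (mul_eq_zero.mp h2).resolve_right hτk
    have hinv1 : 1/τ ≤ 1 := by
      rw [div_le_one hτ]; linarith
    have hinv0 : 0 < 1/τ := by positivity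
    have : 1/τ = c := unique_aux k hk θ hinv0 hinv1 hc0 hc1.le hfinv hfc
    rw [← this, one_div_one_div]
end

section
/- Let φ₁(θ) = (θ^2 − 2θ + √(θ(θ^3 − 4θ^2 + 16)))/2. Then the discriminant D₁(θ) = φ₁(θ)^2 − 16/θ^2 of the quadratic x^2 − φ₁(θ)x + 4/θ^2 = 0 is nonnegative if and only if θ ≥ 2. -/
theorem stmt_12 (θ : ℝ) (hθ : 0 < θ) :
    0 ≤ ((θ^2 - 2*θ + Real.sqrt (θ * (θ^3 - 4*θ^2 + 16))) / 2)^2 - 16 / θ^2 ↔ 2 ≤ θ := by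
  set s := Real.sqrt (θ * (θ^3 - 4*θ^2 + 16)) with hs
  have hA : 0 ≤ θ * (θ^3 - 4*θ^2 + 16) := by
    nlinarith [mul_nonneg hθ.le (sq_nonneg (3*θ - 8)), sq_nonneg (3*θ - 8), hθ.le]
  have hs0 : 0 ≤ s := Real.sqrt_nonneg _
  have hs2 : s^2 = θ * (θ^3 - 4*θ^2 + 16) := Real.sq_sqrt hA
  have hθ2 : (0:ℝ) < θ^2 := by positivity
  constructor
  · intro hD
    by_contra hlt
    push_neg at hlt
    -- θ < 2 : show s*θ < 8 - θ^3 + 2*θ^2, hence D < 0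
    have hRpos : 0 < 8 - θ^3 + 2*θ^2 := by nlinarith
    have hsq : (s*θ)^2 < (8 - θ^3 + 2*θ^2)^2 := by
      have : (s*θ)^2 = θ^2 * (θ^4 - 4*θ^3 + 16*θ) := by
        rw [mul_pow, hs2]; ring
      nlinarith [mul_pos (mul_pos hθ hθ) hθ, sq_nonneg θ]
    have hlt2 : s*θ < 8 - θ^3 + 2*θ^2 := by
      nlinarith [mul_nonneg hs0 hθ.le]
    -- D < 0
    have key : θ * (θ^2 - 2*θ + s) < 8 := by nlinarith
    have key2 : -8 < θ * (θ^2 - 2*θ + s) := by nlinarith [mul_nonneg hθ.le hs0]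
    have : ((θ^2 - 2*θ + s) / 2)^2 - 16 / θ^2 < 0 := by
      rw [div_pow, sub_neg, div_lt_div_iff₀ (by norm_num) hθ2]
      nlinarith
    linarith
  · intro h2
    -- show θ*s ≥ 8 - θ^3 + 2*θ^2
    have key : 8 - θ^3 + 2*θ^2 ≤ θ * s := by
      rcases le_or_gt (8 - θ^3 + 2*θ^2) 0 with hR | hR
      · nlinarith [mul_nonneg hθ.le hs0]
      · have hsq : (8 - θ^3 + 2*θ^2)^2 ≤ (θ*s)^2 := by
          have : (θ*s)^2 = θ^2 * (θ^4 - 4*θ^3 + 16*θ) := by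
            rw [mul_pow, hs2]; ring
          nlinarith [mul_pos hθ hθ]
        nlinarith [mul_nonneg hθ.le hs0]
    have key2 : 8 ≤ θ * (θ^2 - 2*θ + s) := by nlinarith
    rw [sub_nonneg, div_pow, div_le_div_iff₀ hθ2 (by norm_num)]
    nlinarith [key2, sq_nonneg (θ * (θ^2 - 2*θ + s) - 8)]
end

section
/- If (x, y) with x, y > 0 and x ≠ y satisfies the system x = ((θx+2)/(θ+x+y))^2 and y = ((θy+2)/(θ+x+y))^2, then (θ + x + y)^2 = θ(θ(x+y) + 4), and hence x + y equals (θ^2 − 2θ ± √(θ(θ^3 − 4θ^2 + 16)))/2. -/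
theorem stmt_14 (θ x y : ℝ) (hθ : 0 < θ) (hx : 0 < x) (hy : 0 < y) (hxy : x ≠ y)
    (h1 : x = ((θ*x + 2) / (θ + x + y))^2) (h2 : y = ((θ*y + 2) / (θ + x + y))^2) :
    (θ + x + y)^2 = θ * (θ * (x + y) + 4) ∧
    (x + y = (θ^2 - 2*θ + Real.sqrt (θ * (θ^3 - 4*θ^2 + 16))) / 2 ∨
     x + y = (θ^2 - 2*θ - Real.sqrt (θ * (θ^3 - 4*θ^2 + 16))) / 2) := by
  have hD : (0:ℝ) < θ + x + y := by linarith
  have hD' : θ + x + y ≠ 0 := ne_of_gt hD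
  have e1 : x * (θ + x + y)^2 = (θ*x + 2)^2 := by
    rw [div_pow] at h1
    field_simp at h1
    linarith
  have e2 : y * (θ + x + y)^2 = (θ*y + 2)^2 := by
    rw [div_pow] at h2
    field_simp at h2
    linarith
  have hsub : x - y ≠ 0 := sub_ne_zero.mpr hxy
  have h3 : (x - y) * ((θ + x + y)^2 - θ * (θ * (x + y) + 4)) = 0 := by
    linear_combination e1 - e2
  have key : (θ + x + y)^2 = θ * (θ * (x + y) + 4) := by
    rcases mul_eq_zero.mp h3 with h | h
    · exact absurd h hsub
    · linarith
  refine ⟨key, ?_⟩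
  have hdisc : θ * (θ^3 - 4*θ^2 + 16) = (2*(x+y) - (θ^2 - 2*θ))^2 := by
    linear_combination (-4 : ℝ) * key
  rw [hdisc, Real.sqrt_sq_eq_abs]
  rcases le_or_gt 0 (2*(x+y) - (θ^2 - 2*θ)) with h | h
  · left; rw [abs_of_nonneg h]; ring
  · right; rw [abs_of_neg h]; ring
end
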